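/- Let S_n^A be a sum of independent Bernoulli random variables with parameters 1/k for k = 1,…,n. Then P[S_n^A = k] = A(n,k)/n! for all k ∈ {0,1,…,n}, where A(n,k) are the unsigned Stirling numbers of the first kind. -/

import Mathlib

open MeasureTheory ProbabilityTheory
open scoped ENNReal

/-- Unsigned Stirling numbers of the first kind. -/
def stirlingA : ℕ → ℕ → ℕ
  | 0, 0 => 1
  | 0, _ + 1 => 0
  | _ + 1, 0 => 0
  | n + 1, k + 1 => stirlingA n k + n * stirlingA n (k + 1)

lemma stirlingA_eq_sum (n k : ℕ) :
    ∑ s ∈ (Finset.range n).powersetCard k, ∏ i ∈ Finset.range n \ s, i = stirlingA n k := by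
  induction n generalizing k with
  | zero =>
    cases k with
    | zero => simp [stirlingA]
    | succ k => simp [stirlingA]
  | succ n ih =>
    cases k with
    | zero =>
      rw [show stirlingA (n+1) 0 = 0 from rfl]
      simp only [Finset.powersetCard_zero, Finset.sum_singleton, Finset.sdiff_empty]
      exact Finset.prod_eq_zero (Finset.mem_range.mpr n.succ_pos) rfl
    | succ k =>
      have hns : n ∉ Finset.range n := Finset.notMem_range_self
      rw [Finset.range_add_one, Finset.powersetCard_succ_insert hns]
      have hdisj : Disjoint ((Finset.range n).powersetCard (k+1))
          (((Finset.range n).powersetCard k).image (insert n)) := by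
        rw [Finset.disjoint_left]
        intro s hs hs'
        obtain ⟨t, ht, rfl⟩ := Finset.mem_image.mp hs'
        have := (Finset.mem_powersetCard.mp hs).1
        exact hns (this (Finset.mem_insert_self n t))
      rw [Finset.sum_union hdisj]
      have h1 : ∑ s ∈ (Finset.range n).powersetCard (k+1),
          ∏ i ∈ insert n (Finset.range n) \ s, i = n * stirlingA n (k+1) := by
        rw [← ih (k+1), Finset.mul_sum]
        refine Finset.sum_congr rfl fun s hs => ?_
        have hsub := (Finset.mem_powersetCard.mp hs).1
        have hn : n ∉ s := fun h => hns (hsub h)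
        rw [Finset.insert_sdiff_of_notMem _ hn,
          Finset.prod_insert (fun h => hns (Finset.mem_sdiff.mp h).1)]
      have h2 : ∑ s ∈ ((Finset.range n).powersetCard k).image (insert n),
          ∏ i ∈ insert n (Finset.range n) \ s, i = stirlingA n k := by
        rw [Finset.sum_image, ← ih k]
        · refine Finset.sum_congr rfl fun s hs => ?_
          have hsub := (Finset.mem_powersetCard.mp hs).1
          have hn : n ∉ s := fun h => hns (hsub h)
          congr 1
          ext j
          simp only [Finset.mem_sdiff, Finset.mem_insert, Finset.mem_range]
          constructor
          · rintro ⟨hj | hj, hj'⟩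
            · exact absurd (Or.inl hj) hj'
            · exact ⟨hj, fun h => hj' (Or.inr h)⟩
          · rintro ⟨hj, hj'⟩
            refine ⟨Or.inr hj, ?_⟩
            rintro (rfl | h)
            · exact hns (Finset.mem_range.mpr hj)
            · exact hj' h
        · intro s hs t ht hst
          have hns' : n ∉ s := fun h => hns ((Finset.mem_powersetCard.mp hs).1 h)
          have hnt' : n ∉ t := fun h => hns ((Finset.mem_powersetCard.mp ht).1 h)
          rw [← Finset.erase_insert hns', ← Finset.erase_insert hnt', hst]
      rw [h1, h2, show stirlingA (n+1) (k+1) = stirlingA n k + n * stirlingA n (k+1) from rfl]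
      ring

lemma ennreal_prod_div {ι : Type*} (s : Finset ι) (f g : ι → ℝ≥0∞)
    (hg0 : ∀ i ∈ s, g i ≠ 0) (hgt : ∀ i ∈ s, g i ≠ ∞) :
    ∏ i ∈ s, f i / g i = (∏ i ∈ s, f i) / ∏ i ∈ s, g i := by
  induction s using Finset.cons_induction with
  | empty => simp
  | cons a s ha ih =>
    rw [Finset.prod_cons, Finset.prod_cons, Finset.prod_cons,
      ih (fun i hi => hg0 i (Finset.mem_cons_of_mem hi))
        (fun i hi => hgt i (Finset.mem_cons_of_mem hi)),
      div_eq_mul_inv, div_eq_mul_inv, div_eq_mul_inv,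
      ENNReal.mul_inv (Or.inl (hg0 a (Finset.mem_cons_self a s)))
        (Or.inl (hgt a (Finset.mem_cons_self a s))),
      mul_mul_mul_comm]

lemma stirlingA_eq_sum_fin (n k : ℕ) :
    ∑ s ∈ Finset.powersetCard k (Finset.univ : Finset (Fin n)),
      ∏ i ∈ Finset.univ \ s, (i : ℕ) = stirlingA n k := by
  rw [← stirlingA_eq_sum n k]
  have hr : Finset.range n = (Finset.univ : Finset (Fin n)).map Fin.valEmbedding := by
    rw [Fin.map_valEmbedding_univ, Nat.Iio_eq_range]
  rw [hr, Finset.powersetCard_map, Finset.sum_map]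
  refine Finset.sum_congr rfl fun s hs => ?_
  have hsd : ((Finset.univ : Finset (Fin n)).map Fin.valEmbedding) \
      ((Finset.mapEmbedding Fin.valEmbedding).toEmbedding s) =
      (Finset.univ \ s).map Fin.valEmbedding := by
    rw [show (Finset.mapEmbedding Fin.valEmbedding).toEmbedding s = s.map Fin.valEmbedding from
      Finset.mapEmbedding_apply]
    ext j
    simp only [Finset.mem_sdiff, Finset.mem_map, Finset.mem_univ, true_and,
      Fin.valEmbedding_apply]
    constructor
    · rintro ⟨⟨i, rfl⟩, h2⟩
      exact ⟨i, fun hi => h2 ⟨i, hi, rfl⟩, rfl⟩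
    · rintro ⟨i, hi, rfl⟩
      exact ⟨⟨i, rfl⟩, fun ⟨i', hi', he⟩ => hi (by rwa [← Fin.val_injective he])⟩
  rw [hsd, Finset.prod_map]
  rfl

theorem stmt_4 (n : ℕ) (hn : 1 ≤ n)
    {Ω : Type*} [MeasurableSpace Ω] (μ : Measure Ω) [IsProbabilityMeasure μ]
    (X : Fin n → Ω → ℕ) (hmeas : ∀ i, Measurable (X i))
    (hind : iIndepFun X μ)
    (hX1 : ∀ i : Fin n, μ {ω | X i ω = 1} = 1 / ((i : ℕ) + 1 : ℝ≥0∞))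
    (hX0 : ∀ i : Fin n, μ {ω | X i ω = 0} = 1 - 1 / ((i : ℕ) + 1 : ℝ≥0∞))
    (k : ℕ) (hk : k ≤ n) :
    μ {ω | ∑ i, X i ω = k} = (stirlingA n k : ℝ≥0∞) / (n.factorial : ℝ≥0∞) := by
  classical
  have hd0 : ∀ i : Fin n, ((i : ℕ) + 1 : ℝ≥0∞) ≠ 0 := fun i => by
    exact ((zero_lt_one).trans_le le_add_self).ne'
  have hdt : ∀ i : Fin n, ((i : ℕ) + 1 : ℝ≥0∞) ≠ ∞ := fun i => by
    simp [ENNReal.add_eq_top]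
  have hone : ∀ i : Fin n, (1 : ℝ≥0∞) / ((i : ℕ) + 1) ≠ ∞ := fun i => by
    simp [ENNReal.div_eq_top, hd0 i]
  have hX0' : ∀ i : Fin n, μ {ω | X i ω = 0} = ((i : ℕ) : ℝ≥0∞) / ((i : ℕ) + 1) := by
    intro i
    rw [hX0 i]
    refine ENNReal.sub_eq_of_eq_add (hone i) ?_
    rw [ENNReal.div_add_div_same, ENNReal.div_self (hd0 i) (hdt i)]
  set B : Finset (Fin n) → Set Ω :=
    fun s => ⋂ i, X i ⁻¹' {if i ∈ s then 1 else 0} with hB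
  have hBmeas : ∀ s, MeasurableSet (B s) := fun s =>
    MeasurableSet.iInter fun i => (hmeas i) (measurableSet_singleton _)
  have hBval : ∀ s : Finset (Fin n), μ (B s) =
      ((∏ i ∈ Finset.univ \ s, (i : ℕ) : ℕ) : ℝ≥0∞) / (n.factorial : ℝ≥0∞) := by
    intro s
    rw [hB]
    rw [hind.meas_iInter (fun i => ⟨{if i ∈ s then 1 else 0}, measurableSet_singleton _, rfl⟩)]
    have hfac : ∀ i : Fin n, μ (X i ⁻¹' {if i ∈ s then 1 else 0}) =
        (if i ∈ s then (1 : ℝ≥0∞) else ((i : ℕ) : ℝ≥0∞)) / ((i : ℕ) + 1) := by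
      intro i
      by_cases h : i ∈ s
      · simp only [h, if_true]
        exact hX1 i
      · simp only [h, if_false]
        exact hX0' i
    rw [Finset.prod_congr rfl (fun i _ => hfac i),
      ennreal_prod_div _ _ _ (fun i _ => hd0 i) (fun i _ => hdt i)]
    congr 1
    · rw [← Finset.prod_sdiff (Finset.subset_univ s),
        Finset.prod_eq_one (fun i hi => if_pos hi), mul_one, Nat.cast_prod]
      exact Finset.prod_congr rfl (fun i hi => if_neg (Finset.mem_sdiff.mp hi).2)
    · rw [Fin.prod_univ_eq_prod_range (fun j => ((j : ℕ) : ℝ≥0∞) + 1),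
        ← Finset.prod_range_add_one_eq_factorial, Nat.cast_prod]
      push_cast
      rfl
  set E : Set Ω := {ω | ∀ i, X i ω ≤ 1} with hE
  have hEi : ∀ i : Fin n, μ {ω | X i ω ≤ 1} = 1 := by
    intro i
    have hset : {ω | X i ω ≤ 1} = {ω | X i ω = 0} ∪ {ω | X i ω = 1} := by
      ext ω
      simp [Nat.le_one_iff_eq_zero_or_eq_one]
    have hdisj : Disjoint {ω | X i ω = 0} {ω | X i ω = 1} := by
      rw [Set.disjoint_left]
      rintro ω h0 h1
      simp only [Set.mem_setOf_eq] at h0 h1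
      omega
    have hm1 : MeasurableSet {ω | X i ω = 1} := (hmeas i) (measurableSet_singleton 1)
    rw [hset, measure_union hdisj hm1, hX0 i, hX1 i,
      tsub_add_cancel_of_le (by rw [one_div]; exact ENNReal.inv_le_one.mpr le_add_self)]
  have hEc : μ Eᶜ = 0 := by
    have hsub : Eᶜ ⊆ ⋃ i, {ω | X i ω ≤ 1}ᶜ := by
      intro ω hω
      simp only [hE, Set.mem_compl_iff, Set.mem_setOf_eq, not_forall] at hω
      obtain ⟨i, hi⟩ := hω
      exact Set.mem_iUnion.mpr ⟨i, hi⟩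
    refine measure_mono_null hsub (measure_iUnion_null fun i => ?_)
    have hm : MeasurableSet {ω | X i ω ≤ 1} := (hmeas i) measurableSet_Iic
    exact (prob_compl_eq_zero_iff hm).mpr (hEi i)
  have key : {ω | ∑ i, X i ω = k} ∩ E =
      ⋃ s ∈ Finset.powersetCard k (Finset.univ : Finset (Fin n)), B s := by
    ext ω
    simp only [Set.mem_inter_iff, Set.mem_setOf_eq, Set.mem_iUnion, hB, hE, Set.mem_iInter,
      Set.mem_preimage, Set.mem_singleton_iff, Finset.mem_powersetCard, exists_prop]
    constructor
    · rintro ⟨hsum, hle⟩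
      refine ⟨Finset.univ.filter (fun i => X i ω = 1), ⟨Finset.subset_univ _, ?_⟩, fun i => ?_⟩
      · rw [← hsum, Finset.card_filter]
        refine Finset.sum_congr rfl fun i _ => ?_
        rcases Nat.le_one_iff_eq_zero_or_eq_one.mp (hle i) with h | h <;> simp [h]
      · by_cases h : X i ω = 1
        · simp [h]
        · have h0 : X i ω = 0 := by
            rcases Nat.le_one_iff_eq_zero_or_eq_one.mp (hle i) with h' | h'
            · exact h'
            · exact absurd h' h
          simp [h0, h]
    · rintro ⟨s, ⟨-, hcard⟩, hω⟩
      constructor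
      · calc ∑ i, X i ω = ∑ i, (if i ∈ s then 1 else 0) :=
              Finset.sum_congr rfl (fun i _ => hω i)
          _ = s.card := by
              rw [Finset.sum_ite_mem, Finset.univ_inter, Finset.sum_const, smul_eq_mul, mul_one]
          _ = k := hcard
      · intro i
        rw [hω i]
        split <;> omega
  have hpd : (↑(Finset.powersetCard k (Finset.univ : Finset (Fin n))) :
      Set (Finset (Fin n))).PairwiseDisjoint B := by
    intro s hs t ht hst
    rw [Function.onFun, Set.disjoint_left]
    intro ω hωs hωt
    apply hst
    have hvs : ∀ i, X i ω = if i ∈ s then 1 else 0 := fun i => Set.mem_iInter.mp hωs i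
    have hvt : ∀ i, X i ω = if i ∈ t then 1 else 0 := fun i => Set.mem_iInter.mp hωt i
    ext i
    have := (hvs i).symm.trans (hvt i)
    by_cases his : i ∈ s <;> by_cases hit : i ∈ t <;> simp_all
  calc μ {ω | ∑ i, X i ω = k} = μ ({ω | ∑ i, X i ω = k} ∩ E) :=
        (measure_inter_conull hEc).symm
    _ = μ (⋃ s ∈ Finset.powersetCard k (Finset.univ : Finset (Fin n)), B s) := by rw [key]
    _ = ∑ s ∈ Finset.powersetCard k (Finset.univ : Finset (Fin n)), μ (B s) :=
        measure_biUnion_finset hpd (fun s _ => hBmeas s)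
    _ = ∑ s ∈ Finset.powersetCard k (Finset.univ : Finset (Fin n)),
          ((∏ i ∈ Finset.univ \ s, (i : ℕ) : ℕ) : ℝ≥0∞) / (n.factorial : ℝ≥0∞) :=
        Finset.sum_congr rfl (fun s _ => hBval s)
    _ = ((∑ s ∈ Finset.powersetCard k (Finset.univ : Finset (Fin n)),
          ∏ i ∈ Finset.univ \ s, (i : ℕ) : ℕ) : ℝ≥0∞) / (n.factorial : ℝ≥0∞) := by
        rw [Nat.cast_sum]
        simp only [div_eq_mul_inv, ← Finset.sum_mul]
    _ = (stirlingA n k : ℝ≥0∞) / (n.factorial : ℝ≥0∞) := by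
        rw [stirlingA_eq_sum_fin]
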